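/- Let n = p1 · p2 · ... · pl be a squarefree odd integer coprime to 6, with distinct primes pi. The number of pairs (a,b) in Z/nZ × Z/nZ with 4a^3 + 27b^2 a unit in Z/nZ equals the product over i of the number of pairs (a_i, b_i) in Z/p_i Z × Z/p_i Z with 4a_i^3 + 27b_i^2 ≠ 0; in particular it equals φ(n^2). -/

import Mathlib

lemma card_zeroset (F : Type*) [Field F] (h2 : (2:F) ≠ 0) (h3 : (3:F) ≠ 0) :
    Nat.card {ab : F × F // 4 * ab.1 ^ 3 + 27 * ab.2 ^ 2 = 0} = Nat.card F := by
  have h27 : (27:F) ≠ 0 := by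
    intro h; apply h3
    have h' : (3:F)^3 = 0 := by norm_num at h ⊢; linear_combination h
    exact pow_eq_zero_iff (n := 3) (by norm_num) |>.mp h'
  refine (Nat.card_congr ?_).symm
  refine ⟨fun t => ⟨(-3 * t ^ 2, 2 * t ^ 3), by ring⟩,
    fun s => -3 * s.1.2 / (2 * s.1.1), ?_, ?_⟩
  · intro t
    simp only
    rcases eq_or_ne t 0 with rfl | ht
    · simp
    · have : (2 * (-3 * t ^ 2)) ≠ 0 := by
        apply mul_ne_zero h2
        exact mul_ne_zero (neg_ne_zero.mpr h3) (pow_ne_zero _ ht)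
      field_simp
  · rintro ⟨⟨a, b⟩, h⟩
    simp only at h ⊢
    rcases eq_or_ne a 0 with rfl | ha
    · have hb : b = 0 := by
        have h' : 27 * b ^ 2 = 0 := by linear_combination h
        rcases mul_eq_zero.mp h' with h' | h'
        · exact absurd h' h27
        · exact pow_eq_zero_iff (by norm_num) |>.mp h'
      subst hb; simp
    · have h2a : (2 * a) ≠ 0 := mul_ne_zero h2 ha
      ext
      · show -3 * (-3 * b / (2 * a)) ^ 2 = a
        field_simp
        linear_combination -h
      · show 2 * (-3 * b / (2 * a)) ^ 3 = b
        field_simp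
        linear_combination (-b) * h

lemma zmod_two_ne (p : ℕ) (hp : p.Prime) (hp2 : p ≠ 2) : (2 : ZMod p) ≠ 0 := by
  intro h
  have : ((2:ℕ) : ZMod p) = 0 := by exact_mod_cast h
  exact hp2 ((Nat.prime_dvd_prime_iff_eq hp Nat.prime_two).mp
    ((ZMod.natCast_eq_zero_iff 2 p).mp this))

lemma zmod_three_ne (p : ℕ) (hp : p.Prime) (hp3 : p ≠ 3) : (3 : ZMod p) ≠ 0 := by
  intro h
  have : ((3:ℕ) : ZMod p) = 0 := by exact_mod_cast h
  exact hp3 ((Nat.prime_dvd_prime_iff_eq hp Nat.prime_three).mp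
    ((ZMod.natCast_eq_zero_iff 3 p).mp this))

lemma card_neset (p : ℕ) (hp : p.Prime) (hp2 : p ≠ 2) (hp3 : p ≠ 3) :
    Nat.card {ab : ZMod p × ZMod p | 4 * ab.1 ^ 3 + 27 * ab.2 ^ 2 ≠ 0} = p ^ 2 - p := by
  haveI : Fact p.Prime := ⟨hp⟩
  classical
  have hz := card_zeroset (ZMod p) (zmod_two_ne p hp hp2) (zmod_three_ne p hp hp3)
  rw [Nat.card_zmod] at hz
  have htot : Nat.card (ZMod p × ZMod p) = p ^ 2 := by
    simp [Nat.card_eq_fintype_card, ZMod.card, sq]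
  have hc : Nat.card {ab : ZMod p × ZMod p | 4 * ab.1 ^ 3 + 27 * ab.2 ^ 2 ≠ 0}
      = Nat.card (ZMod p × ZMod p)
        - Nat.card {ab : ZMod p × ZMod p // 4 * ab.1 ^ 3 + 27 * ab.2 ^ 2 = 0} := by
    simp only [Nat.card_eq_fintype_card, Set.coe_setOf]
    exact Fintype.card_subtype_compl _
  rw [hc, htot, hz]

lemma isUnit_pi_iff' {ι : Type*} {M : ι → Type*} [∀ i, Monoid (M i)] (x : ∀ i, M i) :
    IsUnit x ↔ ∀ i, IsUnit (x i) := by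
  constructor
  · rintro ⟨u, rfl⟩ i
    exact ⟨⟨u.val i, u.inv i, congrFun u.val_inv i, congrFun u.inv_val i⟩, rfl⟩
  · intro h
    exact ⟨⟨x, fun i => ↑(h i).unit⁻¹,
      funext fun i => (h i).mul_val_inv, funext fun i => (h i).val_inv_mul⟩, rfl⟩

lemma totient_prod' {ι : Type*} (s : Finset ι) (f : ι → ℕ)
    (h : Set.Pairwise ↑s (Function.onFun Nat.Coprime f)) :
    Nat.totient (∏ i ∈ s, f i) = ∏ i ∈ s, Nat.totient (f i) := by
  classical
  induction s using Finset.induction_on with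
  | empty => simp
  | @insert a s ha ih =>
    rw [Finset.prod_insert ha, Finset.prod_insert ha,
      Nat.totient_mul, ih (h.mono (fun x hx => by simp [hx]))]
    exact Nat.Coprime.prod_right fun i hi =>
      h (by simp) (by simp [hi]) (fun hh => ha (hh ▸ hi))

theorem stmt_15 (l : ℕ) (ps : Fin l → ℕ) (hps : ∀ i, (ps i).Prime)
    (hinj : Function.Injective ps) (n : ℕ) (hn : n = ∏ i, ps i)
    (hcop : Nat.gcd n 6 = 1) :
    Nat.card {ab : ZMod n × ZMod n | IsUnit (4 * ab.1 ^ 3 + 27 * ab.2 ^ 2)} =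
      ∏ i, Nat.card {ab : ZMod (ps i) × ZMod (ps i) |
        4 * ab.1 ^ 3 + 27 * ab.2 ^ 2 ≠ 0} ∧
    Nat.card {ab : ZMod n × ZMod n | IsUnit (4 * ab.1 ^ 3 + 27 * ab.2 ^ 2)} =
      Nat.totient (n ^ 2) := by
  haveI : ∀ i, Fact (ps i).Prime := fun i => ⟨hps i⟩
  have hdvd : ∀ i, ps i ∣ n := fun i => hn ▸ Finset.dvd_prod_of_mem ps (Finset.mem_univ i)
  have hp2 : ∀ i, ps i ≠ 2 := by
    intro i h
    have h2 : (2:ℕ) ∣ Nat.gcd n 6 := Nat.dvd_gcd (h ▸ hdvd i) (by norm_num)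
    rw [hcop] at h2; norm_num at h2
  have hp3 : ∀ i, ps i ≠ 3 := by
    intro i h
    have h3 : (3:ℕ) ∣ Nat.gcd n 6 := Nat.dvd_gcd (h ▸ hdvd i) (by norm_num)
    rw [hcop] at h3; norm_num at h3
  have hpair : Pairwise (Function.onFun Nat.Coprime ps) := fun i j hij =>
    (Nat.coprime_primes (hps i) (hps j)).mpr (fun h => hij (hinj h))
  subst hn
  set e := ZMod.prodEquivPi ps hpair with he
  -- the key equivalence
  have key : {ab : ZMod (∏ i, ps i) × ZMod (∏ i, ps i) |
      IsUnit (4 * ab.1 ^ 3 + 27 * ab.2 ^ 2)} ≃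
      ∀ i, {ab : ZMod (ps i) × ZMod (ps i) | 4 * ab.1 ^ 3 + 27 * ab.2 ^ 2 ≠ 0} := by
    refine Equiv.trans (Equiv.subtypeEquiv
      (⟨fun x => fun i => (e x.1 i, e x.2 i),
        fun y => (e.symm fun i => (y i).1, e.symm fun i => (y i).2), ?_, ?_⟩ :
        (ZMod (∏ i, ps i) × ZMod (∏ i, ps i)) ≃ ∀ i, ZMod (ps i) × ZMod (ps i)) ?_)
      Equiv.subtypePiEquivPi
    · intro x; simp
    · intro y; simp
    · intro x
      show IsUnit _ ↔ ∀ i, 4 * (e x.1 i) ^ 3 + 27 * (e x.2 i) ^ 2 ≠ 0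
      have hmap : e (4 * x.1 ^ 3 + 27 * x.2 ^ 2)
          = fun i => 4 * (e x.1 i) ^ 3 + 27 * (e x.2 i) ^ 2 := by
        rw [map_add, map_mul, map_mul, map_pow, map_pow, map_ofNat, map_ofNat]
        rfl
      constructor
      · intro h i
        have := (isUnit_pi_iff' _).mp (hmap ▸ h.map e) i
        exact fun h0 => by rw [h0] at this; exact (not_isUnit_zero this)
      · intro h
        have hu : IsUnit (e (4 * x.1 ^ 3 + 27 * x.2 ^ 2)) := by
          rw [hmap]
          exact (isUnit_pi_iff' _).mpr fun i => isUnit_iff_ne_zero.mpr (h i)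
        have := hu.map e.symm
        simpa using this
  have h1 : Nat.card {ab : ZMod (∏ i, ps i) × ZMod (∏ i, ps i) |
      IsUnit (4 * ab.1 ^ 3 + 27 * ab.2 ^ 2)} =
      ∏ i, Nat.card {ab : ZMod (ps i) × ZMod (ps i) |
        4 * ab.1 ^ 3 + 27 * ab.2 ^ 2 ≠ 0} := by
    rw [Nat.card_congr key, Nat.card_pi]
  refine ⟨h1, ?_⟩
  rw [h1]
  have h2 : ∀ i, Nat.card {ab : ZMod (ps i) × ZMod (ps i) |
      4 * ab.1 ^ 3 + 27 * ab.2 ^ 2 ≠ 0} = Nat.totient ((ps i) ^ 2) := by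
    intro i
    rw [card_neset (ps i) (hps i) (hp2 i) (hp3 i),
      Nat.totient_prime_pow (hps i) (by norm_num)]
    have := (hps i).pos
    simp [sq, Nat.mul_sub_one, Nat.mul_pred]
  calc ∏ i, Nat.card {ab : ZMod (ps i) × ZMod (ps i) |
        4 * ab.1 ^ 3 + 27 * ab.2 ^ 2 ≠ 0}
      = ∏ i, Nat.totient ((ps i) ^ 2) := by exact Finset.prod_congr rfl fun i _ => h2 i
    _ = Nat.totient (∏ i, (ps i) ^ 2) := by
        refine (totient_prod' _ _ ?_).symm
        intro i _ j _ hij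
        show Nat.Coprime (ps i ^ 2) (ps j ^ 2)
        exact Nat.Coprime.pow _ _ (hpair hij)
    _ = Nat.totient ((∏ i, ps i) ^ 2) := by rw [Finset.prod_pow]
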